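/- arXiv:2304.05710 — 2 statements merged into one kernel-verified Lean document; each statement's English description precedes it below -/
import Mathlib

section
/- Consider the system Σ_m = (A, E_a, C_d, 0) where A is the 3N×3N block matrix [[0, I, 0], [-M⁻¹(L+Θ), -M⁻¹H, M⁻¹Φ], [0, -(κ_D/τ)I, -(1/τ)I]], E_a = [0ᵀ, e_aᵀ, 0ᵀ]ᵀ, C_d = [e_dᵀ, 0ᵀ, 0ᵀ]. Let λ ∈ ℂ with τλ + 1 ≠ 0 and such that Q(λ) = L + Θ + λ²M + λH + (λκ_D/(τλ+1))Φ is invertible. Then λ is an invariant zero of Σ_m with g ≠ 0 if and only if e_dᵀ M Q(λ)⁻¹ e_a = 0; equivalently, since M is diagonal positive, if and only if (Q(λ)⁻¹)_{da} = 0. -/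
open Matrix

/-- A 3×3 block matrix with `N × N` blocks. -/
def blk3 {α : Type*} {N : ℕ} (A11 A12 A13 A21 A22 A23 A31 A32 A33 : Matrix (Fin N) (Fin N) α) :
    Matrix (Fin N ⊕ (Fin N ⊕ Fin N)) (Fin N ⊕ (Fin N ⊕ Fin N)) α :=
  Matrix.of fun i j =>
    match i, j with
    | .inl i, .inl j => A11 i j
    | .inl i, .inr (.inl j) => A12 i j
    | .inl i, .inr (.inr j) => A13 i j
    | .inr (.inl i), .inl j => A21 i j
    | .inr (.inl i), .inr (.inl j) => A22 i j
    | .inr (.inl i), .inr (.inr j) => A23 i j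
    | .inr (.inr i), .inl j => A31 i j
    | .inr (.inr i), .inr (.inl j) => A32 i j
    | .inr (.inr i), .inr (.inr j) => A33 i j

lemma blk3_mulVec {N : ℕ} (A11 A12 A13 A21 A22 A23 A31 A32 A33 : Matrix (Fin N) (Fin N) ℂ)
    (v1 v2 v3 : Fin N → ℂ) :
    (blk3 A11 A12 A13 A21 A22 A23 A31 A32 A33) *ᵥ (Sum.elim v1 (Sum.elim v2 v3)) =
      Sum.elim (A11 *ᵥ v1 + A12 *ᵥ v2 + A13 *ᵥ v3)
        (Sum.elim (A21 *ᵥ v1 + A22 *ᵥ v2 + A23 *ᵥ v3)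
          (A31 *ᵥ v1 + A32 *ᵥ v2 + A33 *ᵥ v3)) := by
  funext i
  rcases i with i | i | i <;>
    simp [blk3, mulVec, dotProduct, Fintype.sum_sum_type] <;> ring

lemma smul_one_sub_blk3 {N : ℕ} (lam : ℂ)
    (A11 A12 A13 A21 A22 A23 A31 A32 A33 : Matrix (Fin N) (Fin N) ℂ) :
    lam • (1 : Matrix (Fin N ⊕ (Fin N ⊕ Fin N)) (Fin N ⊕ (Fin N ⊕ Fin N)) ℂ)
        - blk3 A11 A12 A13 A21 A22 A23 A31 A32 A33 =
      blk3 (lam • 1 - A11) (-A12) (-A13) (-A21) (lam • 1 - A22) (-A23)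
        (-A31) (-A32) (lam • 1 - A33) := by
  funext i j
  rcases i with i | i | i <;> rcases j with j | j | j <;>
    simp [blk3, Matrix.one_apply, Matrix.sub_apply, Matrix.smul_apply, Sum.inl.injEq,
      Sum.inr.injEq]

lemma elim3_eq_iff {N : ℕ} (u1 u2 u3 w1 w2 w3 : Fin N → ℂ) :
    Sum.elim u1 (Sum.elim u2 u3) = Sum.elim w1 (Sum.elim w2 w3) ↔
      u1 = w1 ∧ u2 = w2 ∧ u3 = w3 := by
  constructor
  · intro hEq
    refine ⟨funext fun i => congrFun hEq (.inl i), funext fun i => congrFun hEq (.inr (.inl i)),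
      funext fun i => congrFun hEq (.inr (.inr i))⟩
  · rintro ⟨rfl, rfl, rfl⟩; rfl

/-- For the system `Σ_m = (A, E_a, C_d, 0)` with the 3N×3N closed-loop
matrix `A`, `E_a = [0; e_a; 0]`, `C_d = [e_dᵀ, 0, 0]`, and `λ ∈ ℂ` with `τλ + 1 ≠ 0` and
`Q(λ) = L + Θ + λ²M + λH + (λκ_D/(τλ+1))Φ` invertible, `λ` is an invariant zero of `Σ_m`
with `g ≠ 0` if and only if `e_dᵀ M Q(λ)⁻¹ e_a = 0`, equivalently `(Q(λ)⁻¹)_{da} = 0`. -/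
theorem stmt11 {N : ℕ} (a : Matrix (Fin N) (Fin N) ℝ)
    (ha_symm : ∀ i j, a i j = a j i) (ha_nonneg : ∀ i j, 0 ≤ a i j)
    (ha_diag : ∀ i, a i i = 0)
    (ha_conn : ∀ i j : Fin N, Relation.ReflTransGen (fun u v => a u v ≠ 0) i j)
    (L : Matrix (Fin N) (Fin N) ℝ)
    (hL : L = Matrix.of fun i j => if i = j then ∑ k, a i k else -(a i j))
    (θ m h φ : Fin N → ℝ)
    (hθ : ∀ i, 0 < θ i) (hm : ∀ i, 0 < m i) (hh : ∀ i, 0 < h i) (hφ : ∀ i, 0 < φ i)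
    (κ τ : ℝ) (hκ : 0 < κ) (hτ : 0 < τ)
    (d ia : Fin N) (lam : ℂ) (hlam : τ * lam + 1 ≠ 0)
    (Lc Mc Hc Θc Φc : Matrix (Fin N) (Fin N) ℂ)
    (hLc : Lc = L.map (Complex.ofReal ·))
    (hMc : Mc = Matrix.diagonal fun i => (m i : ℂ))
    (hHc : Hc = Matrix.diagonal fun i => (h i : ℂ))
    (hΘc : Θc = Matrix.diagonal fun i => (θ i : ℂ))
    (hΦc : Φc = Matrix.diagonal fun i => (φ i : ℂ))
    (A : Matrix (Fin N ⊕ (Fin N ⊕ Fin N)) (Fin N ⊕ (Fin N ⊕ Fin N)) ℂ)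
    (hA : A = blk3 0 1 0
      (-(Mc⁻¹ * (Lc + Θc))) (-(Mc⁻¹ * Hc)) (Mc⁻¹ * Φc)
      0 (-(((κ : ℂ) / (τ : ℂ)) • (1 : Matrix (Fin N) (Fin N) ℂ)))
      (-((τ : ℂ)⁻¹ • (1 : Matrix (Fin N) (Fin N) ℂ))))
    (Q : Matrix (Fin N) (Fin N) ℂ)
    (hQ : Q = Lc + Θc + lam ^ 2 • Mc + lam • Hc + (lam * κ / (τ * lam + 1)) • Φc)
    (hQinv : IsUnit Q.det) :
    (∃ x : (Fin N ⊕ (Fin N ⊕ Fin N)) → ℂ, x ≠ 0 ∧ ∃ g : ℂ, g ≠ 0 ∧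
        (lam • (1 : Matrix (Fin N ⊕ (Fin N ⊕ Fin N)) (Fin N ⊕ (Fin N ⊕ Fin N)) ℂ) - A) *ᵥ x
          = g • Sum.elim (0 : Fin N → ℂ) (Sum.elim (Pi.single ia 1) (0 : Fin N → ℂ)) ∧
        Sum.elim (Pi.single d 1) (0 : (Fin N ⊕ Fin N) → ℂ) ⬝ᵥ x = 0)
      ↔ (Pi.single d 1 : Fin N → ℂ) ⬝ᵥ (Mc *ᵥ (Q⁻¹ *ᵥ Pi.single ia 1)) = 0 ∧
        Q⁻¹ d ia = 0 := by
  -- basic scalar facts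
  have hτ0 : (τ : ℂ) ≠ 0 := by exact_mod_cast hτ.ne'
  have hlam' : lam + (τ : ℂ)⁻¹ ≠ 0 := by
    intro hc
    apply hlam
    have : (τ : ℂ) * (lam + (τ : ℂ)⁻¹) = τ * lam + 1 := by field_simp
    rw [← this, hc, mul_zero]
  have hmne : ∀ i, (m i : ℂ) ≠ 0 := fun i => by exact_mod_cast (hm i).ne'
  -- invertibility of Mc
  have hMdet : IsUnit Mc.det := by
    rw [hMc, det_diagonal]
    exact isUnit_iff_ne_zero.mpr (Finset.prod_ne_zero_iff.mpr fun i _ => hmne i)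
  have hMM : Mc * Mc⁻¹ = 1 := mul_nonsing_inv Mc hMdet
  have hQQ : Q⁻¹ * Q = 1 := nonsing_inv_mul Q hQinv
  have hQQ' : Q * Q⁻¹ = 1 := mul_nonsing_inv Q hQinv
  -- Mc *ᵥ e_a
  have hMe : Mc *ᵥ Pi.single ia 1 = Pi.single ia ((m ia : ℂ)) := by
    funext i
    rw [hMc]
    rcases eq_or_ne i ia with rfl | hne
    · simp [Matrix.mulVec_diagonal]
    · simp [Matrix.mulVec_diagonal, Pi.single_apply, hne]
  -- the candidate ν₁ direction
  set w : Fin N → ℂ := Q⁻¹ *ᵥ Pi.single ia (m ia : ℂ) with hw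
  have hwd : w d = Q⁻¹ d ia * (m ia : ℂ) := by
    simp [hw, mulVec, dotProduct, Pi.single_apply, mul_ite, mul_comm]
  -- Q *ᵥ w = Mc *ᵥ e_a
  have hQw : Q *ᵥ w = Pi.single ia ((m ia : ℂ)) := by
    rw [hw, Matrix.mulVec_mulVec, hQQ', Matrix.one_mulVec]
  -- the RHS of the iff is equivalent to Q⁻¹ d ia = 0
  have hRHS1 : (Pi.single d 1 : Fin N → ℂ) ⬝ᵥ (Mc *ᵥ (Q⁻¹ *ᵥ Pi.single ia 1)) =
      (m d : ℂ) * (Q⁻¹ d ia) := by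
    rw [hMc]
    simp [Matrix.mulVec_diagonal, mulVec, dotProduct, Pi.single_apply, mul_ite,
      Matrix.diagonal_apply, ite_mul]
  -- split the big vector equation into three block equations
  have hsplit : ∀ (ν₁ ν₂ ν₃ : Fin N → ℂ) (g : ℂ),
      ((lam • (1 : Matrix (Fin N ⊕ (Fin N ⊕ Fin N)) (Fin N ⊕ (Fin N ⊕ Fin N)) ℂ) - A) *ᵥ
          (Sum.elim ν₁ (Sum.elim ν₂ ν₃))
        = g • Sum.elim (0 : Fin N → ℂ) (Sum.elim (Pi.single ia 1) (0 : Fin N → ℂ))) ↔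
      (lam • ν₁ - ν₂ = 0 ∧
        (Mc⁻¹ * (Lc + Θc)) *ᵥ ν₁ + (lam • ν₂ + (Mc⁻¹ * Hc) *ᵥ ν₂) - (Mc⁻¹ * Φc) *ᵥ ν₃
          = g • (Pi.single ia 1 : Fin N → ℂ) ∧
        ((κ : ℂ) / τ) • ν₂ + (lam • ν₃ + (τ : ℂ)⁻¹ • ν₃) = 0) := by
    intro ν₁ ν₂ ν₃ g
    rw [hA, smul_one_sub_blk3, blk3_mulVec]
    have hrhs : g • Sum.elim (0 : Fin N → ℂ) (Sum.elim (Pi.single ia 1) (0 : Fin N → ℂ)) =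
        Sum.elim (0 : Fin N → ℂ) (Sum.elim (g • (Pi.single ia 1 : Fin N → ℂ)) (0 : Fin N → ℂ)) := by
      funext i; rcases i with i | i | i <;> simp [Pi.single_apply]
    rw [hrhs, elim3_eq_iff]
    constructor
    · rintro ⟨h1, h2, h3⟩
      refine ⟨?_, ?_, ?_⟩
      · rw [← h1]; simp [Matrix.sub_mulVec, Matrix.smul_mulVec, Matrix.one_mulVec,
          Matrix.add_mulVec, Matrix.neg_mulVec]
        try first | rfl | abel
      · rw [← h2]; simp [Matrix.sub_mulVec, Matrix.smul_mulVec, Matrix.one_mulVec,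
          Matrix.add_mulVec, Matrix.neg_mulVec]
        try first | rfl | abel
      · rw [← h3]; simp [Matrix.sub_mulVec, Matrix.smul_mulVec, Matrix.one_mulVec,
          Matrix.add_mulVec, Matrix.neg_mulVec]
        try first | rfl | abel
    · rintro ⟨h1, h2, h3⟩
      refine ⟨?_, ?_, ?_⟩
      · rw [← h1]; simp [Matrix.sub_mulVec, Matrix.smul_mulVec, Matrix.one_mulVec,
          Matrix.add_mulVec, Matrix.neg_mulVec]
        try first | rfl | abel
      · rw [← h2]; simp [Matrix.sub_mulVec, Matrix.smul_mulVec, Matrix.one_mulVec,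
          Matrix.add_mulVec, Matrix.neg_mulVec]
        try first | rfl | abel
      · rw [← h3]; simp [Matrix.sub_mulVec, Matrix.smul_mulVec, Matrix.one_mulVec,
          Matrix.add_mulVec, Matrix.neg_mulVec]
        try first | rfl | abel
  -- the key reduction: under the three equations, Q *ᵥ ν₁ = g • (Mc *ᵥ e_a)
  have hkey : ∀ (ν₁ : Fin N → ℂ) (g : ℂ),
      (Mc⁻¹ * (Lc + Θc)) *ᵥ ν₁ + (lam • (lam • ν₁) + (Mc⁻¹ * Hc) *ᵥ (lam • ν₁))
          - (Mc⁻¹ * Φc) *ᵥ ((-(lam * κ / (τ * lam + 1))) • ν₁) = g • (Pi.single ia 1 : Fin N → ℂ) →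
      Q *ᵥ ν₁ = g • (Pi.single ia ((m ia : ℂ)) : Fin N → ℂ) := by
    intro ν₁ g hE
    have := congrArg (fun v => Mc *ᵥ v) hE
    simp only [Matrix.mulVec_add, Matrix.mulVec_sub, Matrix.mulVec_smul, Matrix.mulVec_mulVec,
      ← Matrix.mul_assoc, hMM, Matrix.one_mul] at this
    rw [hQ]
    rw [hMe] at this
    rw [← this]
    simp only [Matrix.add_mulVec, Matrix.smul_mulVec, pow_two, ← smul_smul,
      Matrix.neg_mulVec, neg_smul, sub_neg_eq_add]
    abel
  -- dot product of C_d with a decomposed vector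
  have hdot : ∀ (ν₁ ν₂ ν₃ : Fin N → ℂ),
      Sum.elim (Pi.single d 1) (0 : (Fin N ⊕ Fin N) → ℂ) ⬝ᵥ Sum.elim ν₁ (Sum.elim ν₂ ν₃)
        = ν₁ d := by
    intro ν₁ ν₂ ν₃
    simp [dotProduct, Fintype.sum_sum_type, Pi.single_apply, ite_mul]
  have hMQ : (Mc⁻¹ * Q) *ᵥ w = Pi.single ia 1 := by
    rw [← Matrix.mulVec_mulVec, hQw, ← hMe, Matrix.mulVec_mulVec,
      nonsing_inv_mul Mc hMdet, Matrix.one_mulVec]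
  constructor
  · rintro ⟨x, hx0, g, hg, hEq, hCd⟩
    obtain ⟨ν₁, ν₂, ν₃, rfl⟩ : ∃ ν₁ ν₂ ν₃, x = Sum.elim ν₁ (Sum.elim ν₂ ν₃) :=
      ⟨fun i => x (.inl i), fun i => x (.inr (.inl i)), fun i => x (.inr (.inr i)),
        by funext i; rcases i with i | i | i <;> rfl⟩
    rw [hsplit] at hEq
    obtain ⟨h1, h2, h3⟩ := hEq
    have hν2 : ν₂ = lam • ν₁ := (sub_eq_zero.mp h1).symm
    have hν3 : ν₃ = (-(lam * κ / (τ * lam + 1))) • ν₁ := by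
      have h3' : (lam + (τ : ℂ)⁻¹) • ν₃ = (-((κ : ℂ) / τ * lam)) • ν₁ := by
        rw [hν2] at h3
        rw [add_smul]
        have := eq_neg_of_add_eq_zero_right h3
        rw [this, smul_smul, ← neg_smul]
      have := congrArg (fun v => (lam + (τ : ℂ)⁻¹)⁻¹ • v) h3'
      simp only [inv_smul_smul₀ hlam', smul_smul] at this
      rw [this]
      congr 1
      have h1 : lam + (τ : ℂ)⁻¹ = (↑τ * lam + 1) / τ := by field_simp
      rw [h1]
      field_simp
    rw [hν2, hν3] at h2
    have hQν : Q *ᵥ ν₁ = g • (Pi.single ia ((m ia : ℂ)) : Fin N → ℂ) := hkey ν₁ g h2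
    have hν1 : ν₁ = g • w := by
      have := congrArg (fun v => Q⁻¹ *ᵥ v) hQν
      simpa only [Matrix.mulVec_mulVec, hQQ, Matrix.one_mulVec, Matrix.mulVec_smul] using this
    rw [hdot, hν1] at hCd
    have hwd0 : Q⁻¹ d ia = 0 := by
      have : g * (Q⁻¹ d ia * (m ia : ℂ)) = 0 := by
        simpa [hwd] using hCd
      rcases mul_eq_zero.mp this with hc | hc
      · exact absurd hc hg
      · rcases mul_eq_zero.mp hc with hc' | hc'
        · exact hc'
        · exact absurd hc' (hmne ia)
    exact ⟨by rw [hRHS1, hwd0, mul_zero], hwd0⟩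
  · rintro ⟨-, hQia⟩
    have hwne : w ≠ 0 := by
      intro hc
      have : Q *ᵥ w = 0 := by rw [hc, Matrix.mulVec_zero]
      rw [hQw] at this
      have := congrFun this ia
      rw [Pi.zero_apply, Pi.single_eq_same] at this
      exact hmne ia this
    refine ⟨Sum.elim w (Sum.elim (lam • w) ((-(lam * κ / (τ * lam + 1))) • w)), ?_, 1,
      one_ne_zero, ?_, ?_⟩
    · intro hc
      exact hwne (funext fun i => congrFun hc (.inl i))
    · rw [hsplit]
      refine ⟨by simp, ?_, ?_⟩
      · rw [one_smul]
        rw [hQ] at hMQ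
        simp only [Matrix.mul_add, Matrix.mul_smul, nonsing_inv_mul Mc hMdet,
          Matrix.add_mulVec, Matrix.smul_mulVec, Matrix.one_mulVec] at hMQ
        rw [← hMQ]
        simp only [Matrix.mul_add, Matrix.add_mulVec, Matrix.mulVec_smul,
          Matrix.smul_mulVec, Matrix.mulVec_neg, smul_smul, neg_smul, sub_neg_eq_add, pow_two]
        abel
      · simp only [smul_smul, ← add_smul]
        have hz : (κ : ℂ) / τ * lam + (lam * -(lam * κ / (τ * lam + 1))
            + (τ : ℂ)⁻¹ * -(lam * κ / (τ * lam + 1))) = 0 := by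
          field_simp
          ring
        rw [hz, zero_smul]
    · rw [hdot, hwd, hQia, zero_mul]
end

section
/- Under the setting of the paper, the system Σ_m = (A, E_a, C_d, 0) (with A the closed-loop 3N×3N matrix built from a connected undirected graph Laplacian L and positive diagonal M, H, Θ, Φ, parameters κ_D, τ > 0) has no invariant zero on the positive real line: for every real λ > 0, every attack index a, and every detection index d, λ is not an invariant zero of Σ_m. -/
open Matrix


lemma helper_nonneg {N : ℕ} (a : Matrix (Fin N) (Fin N) ℝ) (ha : ∀ i j, 0 ≤ a i j)
    (p : Fin N → ℝ) (hp : ∀ i, 0 < p i) (v : Fin N → ℝ)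
    (hv : ∀ i, 0 ≤ (p i + ∑ k, a i k) * v i - ∑ k, a i k * v k) : ∀ i, 0 ≤ v i := by
  intro i
  obtain ⟨j0, -, hj0⟩ := Finset.exists_min_image Finset.univ v ⟨i, Finset.mem_univ i⟩
  by_contra hni
  push_neg at hni
  have hj0neg : v j0 < 0 := lt_of_le_of_lt (hj0 i (Finset.mem_univ i)) hni
  have hsum : (∑ k, a j0 k) * v j0 ≤ ∑ k, a j0 k * v k := by
    rw [Finset.sum_mul]
    exact Finset.sum_le_sum fun k _ => mul_le_mul_of_nonneg_left (hj0 k (Finset.mem_univ k)) (ha j0 k)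
  have := hv j0
  nlinarith [mul_pos (hp j0) (neg_pos.mpr hj0neg)]

lemma helper_pos {N : ℕ} (a : Matrix (Fin N) (Fin N) ℝ)
    (ha_symm : ∀ i j, a i j = a j i) (ha : ∀ i j, 0 ≤ a i j)
    (p : Fin N → ℝ) (hp : ∀ i, 0 < p i) (v : Fin N → ℝ) (r : Fin N → ℝ)
    (hr : ∀ i, 0 ≤ r i)
    (hv : ∀ i, (p i + ∑ k, a i k) * v i = r i + ∑ k, a i k * v k)
    (hvnn : ∀ i, 0 ≤ v i) (ia : Fin N) (hria : 0 < r ia)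
    (conn : ∀ j : Fin N, Relation.ReflTransGen (fun u w => a u w ≠ 0) ia j) :
    ∀ j, 0 < v j := by
  have key : ∀ w : Fin N, 0 < r w + ∑ k, a w k * v k → 0 < v w := by
    intro w hw
    rw [← hv w] at hw
    by_contra hc
    push_neg at hc
    have hS : 0 ≤ ∑ k, a w k := Finset.sum_nonneg fun k _ => ha w k
    nlinarith [hp w]
  intro j
  induction conn j with
  | refl =>
    refine key ia ?_
    have : 0 ≤ ∑ k, a ia k * v k := Finset.sum_nonneg fun k _ => mul_nonneg (ha ia k) (hvnn k)
    linarith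
  | @tail b c hab e ih =>
    refine key c ?_
    have hcb : 0 < a c b := lt_of_le_of_ne (ha c b) (fun hne => e (by rw [ha_symm b c, ← hne]))
    have h1 : a c b * v b ≤ ∑ k, a c k * v k := by
      refine Finset.single_le_sum (f := fun k => a c k * v k) (fun k _ => mul_nonneg (ha c k) (hvnn k)) (Finset.mem_univ b)
    have := mul_pos hcb ih
    have := hr c
    linarith

lemma helper_zero {N : ℕ} (a : Matrix (Fin N) (Fin N) ℝ)
    (ha_symm : ∀ i j, a i j = a j i) (ha : ∀ i j, 0 ≤ a i j)
    (p : Fin N → ℝ) (hp : ∀ i, 0 < p i) (v : Fin N → ℝ) (c : ℝ) (ia d : Fin N)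
    (hv : ∀ i, (p i + ∑ k, a i k) * v i - ∑ k, a i k * v k = if i = ia then c else 0)
    (hd : v d = 0)
    (conn : ∀ i j : Fin N, Relation.ReflTransGen (fun u w => a u w ≠ 0) i j) :
    ∀ i, v i = 0 := by
  have hS : ∀ i, ∑ k, a i k * (fun j => -v j) k = -∑ k, a i k * v k := by
    intro i
    simp [mul_neg, Finset.sum_neg_distrib]
  have hv' : ∀ i, (p i + ∑ k, a i k) * (fun j => -v j) i - ∑ k, a i k * (fun j => -v j) k
      = if i = ia then -c else 0 := by
    intro i
    rw [hS i]
    have h := hv i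
    by_cases hi : i = ia
    · rw [if_pos hi] at h ⊢; linear_combination -h
    · rw [if_neg hi] at h ⊢; linear_combination -h
  have nn_of : ∀ (c' : ℝ), 0 ≤ c' → ∀ (w : Fin N → ℝ),
      (∀ i, (p i + ∑ k, a i k) * w i - ∑ k, a i k * w k = if i = ia then c' else 0) →
      ∀ i, 0 ≤ w i := by
    intro c' hc' w hw
    refine helper_nonneg a ha p hp w (fun i => ?_)
    rw [hw i]
    split
    exacts [hc', le_rfl]
  have eq_of : ∀ (c' : ℝ) (w : Fin N → ℝ),
      (∀ i, (p i + ∑ k, a i k) * w i - ∑ k, a i k * w k = if i = ia then c' else 0) →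
      ∀ i, (p i + ∑ k, a i k) * w i = (if i = ia then c' else 0) + ∑ k, a i k * w k := by
    intro c' w hw i
    have := hw i
    linarith
  have pos_of : ∀ (c' : ℝ), 0 < c' → ∀ (w : Fin N → ℝ),
      (∀ i, (p i + ∑ k, a i k) * w i - ∑ k, a i k * w k = if i = ia then c' else 0) →
      ∀ j, 0 < w j := by
    intro c' hc' w hw
    exact helper_pos a ha_symm ha p hp w (fun i => if i = ia then c' else 0)
      (fun i => by show (0:ℝ) ≤ if i = ia then c' else 0; split; exacts [le_of_lt hc', le_rfl])
      (eq_of c' w hw) (nn_of c' (le_of_lt hc') w hw) ia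
      (by show (0:ℝ) < if ia = ia then c' else 0; rw [if_pos rfl]; exact hc')
      (conn ia)
  rcases lt_trichotomy c 0 with hc | hc | hc
  · exfalso
    have := pos_of (-c) (by linarith) _ hv' d
    simp only [hd, neg_zero] at this
    exact lt_irrefl 0 this
  · subst hc
    simp only [neg_zero] at hv'
    intro i
    have h1 := nn_of 0 le_rfl v hv i
    have h2 := nn_of 0 le_rfl _ hv' i
    linarith
  · exfalso
    have := pos_of c hc v hv d
    rw [hd] at this
    exact lt_irrefl 0 this


/-- `lam` is a finite invariant zero of the strictly proper SISO system `(F, B, C, 0)`. -/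
def IsInvariantZero {n : Type*} [Fintype n] [DecidableEq n]
    (F : Matrix n n ℂ) (B C : n → ℂ) (lam : ℂ) : Prop :=
  ∃ x : n → ℂ, x ≠ 0 ∧ ∃ g : ℂ,
    (lam • (1 : Matrix n n ℂ) - F) *ᵥ x = g • B ∧ C ⬝ᵥ x = 0

/-- The system `Σ_m = (A, E_a, C_d, 0)`, with `A` the closed-loop 3N×3N
matrix built from a connected undirected graph Laplacian `L` and positive diagonal
`M, H, Θ, Φ` and `κ_D, τ > 0`, has no invariant zero on the positive real line, for
every attack index `a` and detection index `d`. -/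
theorem stmt12 {N : ℕ} (a : Matrix (Fin N) (Fin N) ℝ)
    (ha_symm : ∀ i j, a i j = a j i) (ha_nonneg : ∀ i j, 0 ≤ a i j)
    (ha_diag : ∀ i, a i i = 0)
    (ha_conn : ∀ i j : Fin N, Relation.ReflTransGen (fun u v => a u v ≠ 0) i j)
    (L : Matrix (Fin N) (Fin N) ℝ)
    (hL : L = Matrix.of fun i j => if i = j then ∑ k, a i k else -(a i j))
    (θ m h φ : Fin N → ℝ)
    (hθ : ∀ i, 0 < θ i) (hm : ∀ i, 0 < m i) (hh : ∀ i, 0 < h i) (hφ : ∀ i, 0 < φ i)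
    (κ τ : ℝ) (hκ : 0 < κ) (hτ : 0 < τ)
    (Lc Mc Hc Θc Φc : Matrix (Fin N) (Fin N) ℂ)
    (hLc : Lc = L.map (Complex.ofReal ·))
    (hMc : Mc = Matrix.diagonal fun i => (m i : ℂ))
    (hHc : Hc = Matrix.diagonal fun i => (h i : ℂ))
    (hΘc : Θc = Matrix.diagonal fun i => (θ i : ℂ))
    (hΦc : Φc = Matrix.diagonal fun i => (φ i : ℂ))
    (A : Matrix (Fin N ⊕ (Fin N ⊕ Fin N)) (Fin N ⊕ (Fin N ⊕ Fin N)) ℂ)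
    (hA : A = blk3 0 1 0
      (-(Mc⁻¹ * (Lc + Θc))) (-(Mc⁻¹ * Hc)) (Mc⁻¹ * Φc)
      0 (-(((κ : ℂ) / (τ : ℂ)) • (1 : Matrix (Fin N) (Fin N) ℂ)))
      (-((τ : ℂ)⁻¹ • (1 : Matrix (Fin N) (Fin N) ℂ)))) :
    ∀ lam : ℝ, 0 < lam → ∀ ia d : Fin N,
      ¬ IsInvariantZero A
        (Sum.elim (0 : Fin N → ℂ) (Sum.elim (Pi.single ia 1) (0 : Fin N → ℂ)))
        (Sum.elim (Pi.single d 1) (0 : (Fin N ⊕ Fin N) → ℂ)) (lam : ℂ) := by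
  
  intro lam hlam ia d hz
  obtain ⟨x, hx, g, h1, h2⟩ := hz
  have hmτ1 : (0:ℝ) < τ * lam + 1 := by positivity
  have hτ1C : ((τ:ℂ) * (lam:ℂ) + 1) ≠ 0 := by
    rw [show ((τ:ℂ) * (lam:ℂ) + 1) = ((τ * lam + 1 : ℝ) : ℂ) by push_cast; ring]
    exact Complex.ofReal_ne_zero.mpr (ne_of_gt hmτ1)
  have hmC : ∀ i : Fin N, ((m i : ℝ):ℂ) ≠ 0 := fun i => Complex.ofReal_ne_zero.mpr (ne_of_gt (hm i))
  have hτC : ((τ:ℝ):ℂ) ≠ 0 := Complex.ofReal_ne_zero.mpr (ne_of_gt hτ)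
  have hMinv : Mc⁻¹ = Matrix.diagonal (fun i => ((m i : ℂ))⁻¹) := by
    subst hMc
    refine Matrix.inv_eq_right_inv ?_
    rw [Matrix.diagonal_mul_diagonal]
    convert Matrix.diagonal_one with i
    exact mul_inv_cancel₀ (Complex.ofReal_ne_zero.mpr (ne_of_gt (hm i)))
  have row1 : ∀ i : Fin N, x (.inr (.inl i)) = (lam : ℂ) * x (.inl i) := by
    intro i
    have hr := congrFun h1 (.inl i)
    simp [hA, blk3, Matrix.sub_mulVec, Matrix.smul_mulVec, Matrix.one_mulVec,
      Matrix.mulVec, dotProduct, Fintype.sum_sum_type, Pi.smul_apply, smul_eq_mul,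
      Matrix.one_apply, Finset.sum_ite_eq, Finset.sum_ite_eq'] at hr
    linear_combination -hr
  have row3 : ∀ i : Fin N, ((lam : ℂ) + (τ:ℂ)⁻¹) * x (.inr (.inr i)) = -((κ:ℂ)/(τ:ℂ)) * x (.inr (.inl i)) := by
    intro i
    have hr := congrFun h1 (.inr (.inr i))
    simp [hA, blk3, Matrix.sub_mulVec, Matrix.smul_mulVec, Matrix.one_mulVec,
      Matrix.mulVec, dotProduct, Fintype.sum_sum_type, Pi.smul_apply, smul_eq_mul,
      Matrix.one_apply, Finset.sum_add_distrib, add_mul, ite_mul, zero_mul,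
      Finset.sum_ite_eq, Finset.sum_ite_eq'] at hr
    linear_combination hr
  have hx3 : ∀ i : Fin N, x (.inr (.inr i)) = -((κ:ℂ) * lam / ((τ:ℂ)*lam+1)) * x (.inl i) := by
    intro i
    have hr := row3 i
    rw [row1 i] at hr
    have hne : ((lam:ℂ) + (τ:ℂ)⁻¹) ≠ 0 := by
      rw [show ((lam:ℂ) + (τ:ℂ)⁻¹) = ((τ:ℂ)*lam+1) / τ by field_simp]
      exact div_ne_zero hτ1C hτC
    field_simp at hr
    rw [eq_comm, neg_mul, neg_eq_iff_eq_neg, div_mul_eq_mul_div, div_eq_iff hτ1C]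
    linear_combination hr
  have row2 : ∀ i : Fin N,
      ∑ k, ((m i:ℂ))⁻¹ * (((if i = k then ∑ j, a i j else -(a i k) : ℝ) : ℂ) + if i = k then ((θ i:ℝ):ℂ) else 0) * x (.inl k)
        + ((lam:ℂ) * x (.inr (.inl i)) + ((m i:ℂ))⁻¹ * (h i:ℝ) * x (.inr (.inl i))
          - ((m i:ℂ))⁻¹ * (φ i:ℝ) * x (.inr (.inr i)))
      = g * (if i = ia then 1 else 0) := by
    intro i
    have hr := congrFun h1 (.inr (.inl i))
    simp [hA, hMinv, hHc, hΘc, hΦc, hLc, hL, blk3, Matrix.sub_mulVec, Matrix.smul_mulVec,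
      Matrix.one_mulVec, Matrix.mulVec, dotProduct, Fintype.sum_sum_type, Pi.smul_apply,
      smul_eq_mul, Matrix.one_apply, Matrix.diagonal_mul, Matrix.mul_apply, Matrix.diagonal_apply,
      Matrix.map_apply, Pi.single_apply, Finset.sum_add_distrib, add_mul, ite_mul, zero_mul,
      Finset.sum_ite_eq, Finset.sum_ite_eq'] at hr
    rw [show (if i = ia then g else 0) = g * (if i = ia then 1 else 0) from by split <;> ring] at hr
    linear_combination hr
  -- clean the Laplacian sum
  have hsplit : ∀ i : Fin N,
      (∑ k, ((m i:ℂ))⁻¹ * (((if i = k then ∑ j, a i j else -(a i k) : ℝ) : ℂ) + if i = k then ((θ i:ℝ):ℂ) else 0) * x (.inl k))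
      = ((m i:ℂ))⁻¹ * (((((∑ j, a i j) + θ i : ℝ)):ℂ) * x (.inl i) - ∑ k, ((a i k:ℝ):ℂ) * x (.inl k)) := by
    intro i
    have e1 : ∀ k : Fin N, ((m i:ℂ))⁻¹ * (((if i = k then ∑ j, a i j else -(a i k) : ℝ) : ℂ) + if i = k then ((θ i:ℝ):ℂ) else 0) * x (.inl k)
        = (if i = k then (((m i:ℂ))⁻¹ * (((∑ j, a i j) + θ i + a i k : ℝ):ℂ) * x (.inl k)) else 0)
          + ((m i:ℂ))⁻¹ * (-((a i k : ℝ):ℂ)) * x (.inl k) := by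
      intro k
      by_cases hik : i = k
      · subst hik
        simp only [if_pos rfl, ha_diag i]
        push_cast
        ring
      · simp only [if_neg hik]
        push_cast
        ring
    have e2 : ∑ k, ((m i:ℂ))⁻¹ * (-((a i k:ℝ):ℂ)) * x (.inl k)
        = -(((m i:ℂ))⁻¹ * ∑ k, ((a i k:ℝ):ℂ) * x (.inl k)) := by
      rw [Finset.mul_sum, ← Finset.sum_neg_distrib]
      exact Finset.sum_congr rfl fun k _ => by ring
    rw [Finset.sum_congr rfl (fun k _ => e1 k), Finset.sum_add_distrib, Finset.sum_ite_eq, e2]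
    simp only [Finset.mem_univ, if_true, ha_diag i]
    push_cast
    ring
  -- the key complex equation
  set S : Fin N → ℝ := fun i => ∑ j, a i j with hS
  set p : Fin N → ℝ := fun i => θ i + lam^2 * m i + lam * h i + (lam * κ / (τ * lam + 1)) * φ i with hp
  have hppos : ∀ i, 0 < p i := by
    intro i
    have h1 : 0 < lam * κ / (τ * lam + 1) * φ i :=
      mul_pos (div_pos (mul_pos hlam hκ) hmτ1) (hφ i)
    have := hθ i; have := hm i; have := hh i
    have h2 : 0 < lam^2 * m i := by positivity
    have h3 : 0 < lam * h i := by positivity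
    simp only [hp]
    linarith
  have keyC : ∀ i : Fin N,
      (((p i + S i : ℝ)):ℂ) * x (.inl i) - ∑ k, ((a i k:ℝ):ℂ) * x (.inl k)
        = if i = ia then g * (m ia : ℝ) else 0 := by
    intro i
    have hri := row2 i
    rw [hsplit i, row1 i, hx3 i] at hri
    by_cases hia : i = ia
    · rw [if_pos hia] at hri ⊢
      rw [← hia]
      simp only [hp, hS]
      push_cast
      push_cast at hri
      linear_combination (norm := skip) (m i:ℂ) * hri
      field_simp [hmC i, hτ1C]
      ring
    · rw [if_neg hia] at hri ⊢
      simp only [hp, hS]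
      push_cast
      push_cast at hri
      linear_combination (norm := skip) (m i:ℂ) * hri
      field_simp [hmC i, hτ1C]
      ring
  -- detection coordinate
  have hxd : x (.inl d) = 0 := by
    simpa [dotProduct, Fintype.sum_sum_type, Pi.single_apply,
      Finset.sum_ite_eq, Finset.sum_ite_eq'] using h2
  -- real and imaginary parts
  have hre : ∀ i, (x (.inl i)).re = 0 := by
    refine helper_zero a ha_symm ha_nonneg p hppos (fun i => (x (.inl i)).re)
      (g * (m ia : ℝ)).re ia d (fun i => ?_) (by simp [hxd]) ha_conn
    have := congrArg Complex.re (keyC i)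
    simpa [Complex.sub_re, Complex.re_sum, Complex.re_ofReal_mul, Complex.add_re,
      apply_ite Complex.re, mul_comm] using this
  have him : ∀ i, (x (.inl i)).im = 0 := by
    refine helper_zero a ha_symm ha_nonneg p hppos (fun i => (x (.inl i)).im)
      (g * (m ia : ℝ)).im ia d (fun i => ?_) (by simp [hxd]) ha_conn
    have := congrArg Complex.im (keyC i)
    simpa [Complex.sub_im, Complex.im_sum, Complex.im_ofReal_mul, Complex.add_im,
      apply_ite Complex.im, mul_comm] using this
  have hx1 : ∀ i, x (.inl i) = 0 := fun i => Complex.ext (hre i) (him i)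
  apply hx
  funext j
  rcases j with i | i | i
  · exact hx1 i
  · rw [row1 i, hx1 i, mul_zero]; rfl
  · rw [hx3 i, hx1 i, mul_zero]; rfl
end
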